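/- Assume q ≥ c_q for some constant c_q > 0. For any 0 ≤ t < T₀ ≤ T and μ ∈ 𝒫₀(𝕊), the set value satisfies the dynamic programming principle: V_state(t,μ) = ∩_{ε>0} { φ: 𝕊 → ℝ : ‖φ − J(T₀,ψ;t,μ,α*;·,α*)‖_∞ ≤ ε for some ψ: 𝕊×𝒫₀(𝕊) → ℝ and α* ∈ 𝒜_state such that ψ(·,μ^{α*}_{T₀}) ∈ V^ε_state(T₀,μ^{α*}_{T₀}) and α* ∈ ℳ^ε_state(T₀,ψ;t,μ) }. -/

import Mathlib

/-!
Statement 0 (Proposition 2.3, time consistency of state-dependent MFE).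

Discrete-time finite-state mean field game.  Time set `𝕋 = {0,…,T}` (we use `ℕ` and
restrict attention to times `≤ T`), finite state space `S`, control set `A`.
Probability measures on `S` are encoded as functions `S → ℝ` satisfying `IsProb`.
-/

open Finset

namespace MFGSetValue

variable {S A : Type*} [Fintype S] [DecidableEq S]

/-- A probability vector on the finite state space `S`. -/
def IsProb (μ : S → ℝ) : Prop := (∀ x, 0 ≤ μ x) ∧ ∑ x, μ x = 1

/-- The measure flow `μ^α` determined by `ℙ^{t,μ,α}`:
`μ^α_t = μ` and `μ^α_{s+1}(y) = ∑_x μ^α_s(x) q(s,x,μ^α_s,α(s,x);y)`.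
(For `s < t` the value is irrelevant; we set it to `μ`.) -/
noncomputable def flow (q : ℕ → S → (S → ℝ) → A → S → ℝ) (α : ℕ → S → A)
    (t : ℕ) (μ : S → ℝ) : ℕ → S → ℝ
  | 0 => μ
  | s + 1 =>
    if s + 1 ≤ t then μ
    else fun y => ∑ x, flow q α t μ s x * q s x (flow q α t μ s) (α s x) y

/-- The law at each time of the Markov chain `ℙ^{{ν_·}; t, x₀, α̃}` started from `x₀`
at time `t`, moving with transitions `q(s, ·, ν_s, α̃(s,·); ·)`. -/
noncomputable def chain (q : ℕ → S → (S → ℝ) → A → S → ℝ) (ν : ℕ → S → ℝ)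
    (αt : ℕ → S → A) (t : ℕ) (x₀ : S) : ℕ → S → ℝ
  | 0 => fun x => if x = x₀ then 1 else 0
  | s + 1 =>
    if s + 1 ≤ t then fun x => if x = x₀ then 1 else 0
    else fun y => ∑ x, chain q ν αt t x₀ s x * q s x (ν s) (αt s x) y

/-- The cost `J(T₀, ψ; {ν_·}; t, x₀, α̃)` with horizon `T₀`, terminal reward `ψ(X_{T₀}, ν_{T₀})`,
running cost `F`, against the measure flow `ν`:
`E[ψ(X_{T₀}, ν_{T₀}) + ∑_{s=t}^{T₀-1} F(s, X_s, ν_s, α̃(s,X_s))]`. -/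
noncomputable def cost (q : ℕ → S → (S → ℝ) → A → S → ℝ)
    (F : ℕ → S → (S → ℝ) → A → ℝ) (T₀ : ℕ) (ψ : S → (S → ℝ) → ℝ)
    (ν : ℕ → S → ℝ) (t : ℕ) (x₀ : S) (αt : ℕ → S → A) : ℝ :=
  (∑ x, chain q ν αt t x₀ T₀ x * ψ x (ν T₀)) +
    ∑ s ∈ Finset.Ico t T₀, ∑ x, chain q ν αt t x₀ s x * F s x (ν s) (αt s x)

/-- The value `v(T₀,ψ; {ν_·}; t, x₀) = inf_{α̃ ∈ 𝒜_state} J(T₀,ψ;{ν_·};t,x₀,α̃)`. -/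
noncomputable def value (q : ℕ → S → (S → ℝ) → A → S → ℝ)
    (F : ℕ → S → (S → ℝ) → A → ℝ) (T₀ : ℕ) (ψ : S → (S → ℝ) → ℝ)
    (ν : ℕ → S → ℝ) (t : ℕ) (x₀ : S) : ℝ :=
  sInf { r : ℝ | ∃ αt : ℕ → S → A, r = cost q F T₀ ψ ν t x₀ αt }

/-- `α ∈ ℳ_state(T₀, ψ; t, μ)`: a state-dependent MFE for the game on `{t,…,T₀}` with
terminal cost `ψ`.  (Taking `T₀ = T`, `ψ = G` gives `ℳ_state(t,μ)`.) -/
def isMFE (q : ℕ → S → (S → ℝ) → A → S → ℝ) (F : ℕ → S → (S → ℝ) → A → ℝ)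
    (T₀ : ℕ) (ψ : S → (S → ℝ) → ℝ) (t : ℕ) (μ : S → ℝ) (α : ℕ → S → A) : Prop :=
  ∀ x, cost q F T₀ ψ (flow q α t μ) t x α = value q F T₀ ψ (flow q α t μ) t x

/-- Concatenation `α ⊕_{T₀} α'`. -/
def concat (T₀ : ℕ) (α α' : ℕ → S → A) : ℕ → S → A :=
  fun s x => if s < T₀ then α s x else α' s x

end MFGSetValue

open MFGSetValue

namespace MFGSetValue

variable {S A : Type*} [Fintype S] [DecidableEq S]

/-- `α ∈ ℳ^ε_state(T₀, ψ; t, μ)`: a state-dependent `ε`-MFE for the game on `{t,…,T₀}`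
with terminal cost `ψ`:  `J(T₀,ψ;t,μ,α;x,α) ≤ inf_{α̃} J(T₀,ψ;t,μ,α;x,α̃) + ε` for all `x`.
(Taking `T₀ = T`, `ψ = G` gives `ℳ^ε_state(t,μ)`.) -/
def isMFEeps (q : ℕ → S → (S → ℝ) → A → S → ℝ) (F : ℕ → S → (S → ℝ) → A → ℝ)
    (T₀ : ℕ) (ψ : S → (S → ℝ) → ℝ) (ε : ℝ) (t : ℕ) (μ : S → ℝ) (α : ℕ → S → A) : Prop :=
  ∀ x, cost q F T₀ ψ (flow q α t μ) t x α ≤ value q F T₀ ψ (flow q α t μ) t x + ε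

/-- `𝕍^ε_state(t,μ)`: the set of `φ : 𝕊 → ℝ` with `‖φ - J(t,μ,α*;·,α*)‖_∞ ≤ ε`
for some `α* ∈ ℳ^ε_state(t,μ)`. -/
noncomputable def setValueEps (q : ℕ → S → (S → ℝ) → A → S → ℝ)
    (F : ℕ → S → (S → ℝ) → A → ℝ) (G : S → (S → ℝ) → ℝ)
    (T : ℕ) (ε : ℝ) (t : ℕ) (μ : S → ℝ) : Set (S → ℝ) :=
  { φ | ∃ α : ℕ → S → A, isMFEeps q F T G ε t μ α ∧
      ∀ x, |φ x - cost q F T G (flow q α t μ) t x α| ≤ ε }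

/-- The set value `𝕍_state(t,μ) := ⋂_{ε>0} 𝕍^ε_state(t,μ)`. -/
noncomputable def setValue (q : ℕ → S → (S → ℝ) → A → S → ℝ)
    (F : ℕ → S → (S → ℝ) → A → ℝ) (G : S → (S → ℝ) → ℝ)
    (T : ℕ) (t : ℕ) (μ : S → ℝ) : Set (S → ℝ) :=
  ⋂ (ε : ℝ) (_ : 0 < ε), setValueEps q F G T ε t μ

end MFGSetValue


namespace MFGSetValue

variable {S A : Type*} [Fintype S] [DecidableEq S]
variable {q : ℕ → S → (S → ℝ) → A → S → ℝ} {F : ℕ → S → (S → ℝ) → A → ℝ}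

lemma chain_of_le {ν : ℕ → S → ℝ} {αt : ℕ → S → A} {t s : ℕ} (h : s ≤ t) (x₀ : S) :
    chain q ν αt t x₀ s = fun x => if x = x₀ then 1 else 0 := by
  cases s with
  | zero => rfl
  | succ n => simp only [chain, if_pos h]

lemma chain_succ_of_le {ν : ℕ → S → ℝ} {αt : ℕ → S → A} {t s : ℕ} (h : t ≤ s) (x₀ : S) :
    chain q ν αt t x₀ (s + 1) =
      fun y => ∑ x, chain q ν αt t x₀ s x * q s x (ν s) (αt s x) y := by
  simp only [chain, if_neg (by omega : ¬ s + 1 ≤ t)]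

lemma chain_congr {ν ν' : ℕ → S → ℝ} {αt αt' : ℕ → S → A} {t : ℕ} (x₀ : S) :
    ∀ s, (∀ r, t ≤ r → r < s → ν r = ν' r ∧ αt r = αt' r) →
      chain q ν αt t x₀ s = chain q ν' αt' t x₀ s := by
  intro s
  induction s with
  | zero => intro _; rfl
  | succ n ih =>
    intro h
    by_cases hn : n + 1 ≤ t
    · rw [chain_of_le hn, chain_of_le hn]
    · push_neg at hn
      have ht : t ≤ n := by omega
      rw [chain_succ_of_le ht, chain_succ_of_le ht]
      have hν : ν n = ν' n := (h n ht (by omega)).1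
      have hα : αt n = αt' n := (h n ht (by omega)).2
      rw [ih (fun r h1 h2 => h r h1 (by omega)), hν, hα]

lemma flow_of_le {α : ℕ → S → A} {t s : ℕ} {μ : S → ℝ} (h : s ≤ t) :
    flow q α t μ s = μ := by
  cases s with
  | zero => rfl
  | succ n => simp only [flow, if_pos h]

lemma flow_succ_of_le {α : ℕ → S → A} {t s : ℕ} {μ : S → ℝ} (h : t ≤ s) :
    flow q α t μ (s + 1) =
      fun y => ∑ x, flow q α t μ s x * q s x (flow q α t μ s) (α s x) y := by
  simp only [flow, if_neg (by omega : ¬ s + 1 ≤ t)]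

lemma flow_congr {α α' : ℕ → S → A} {t : ℕ} {μ : S → ℝ} :
    ∀ s, (∀ r, t ≤ r → r < s → α r = α' r) → flow q α t μ s = flow q α' t μ s := by
  intro s
  induction s with
  | zero => intro _; rfl
  | succ n ih =>
    intro h
    by_cases hn : n + 1 ≤ t
    · rw [flow_of_le hn, flow_of_le hn]
    · push_neg at hn
      have ht : t ≤ n := by omega
      rw [flow_succ_of_le ht, flow_succ_of_le ht,
        ih (fun r h1 h2 => h r h1 (by omega)), (h n ht (by omega))]

lemma flow_restart {α₂ β : ℕ → S → A} {t T₀ : ℕ} {μ : S → ℝ}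
    (h1 : t ≤ T₀) (heq : ∀ r, T₀ ≤ r → α₂ r = β r) :
    ∀ s, T₀ ≤ s → flow q α₂ T₀ (flow q β t μ T₀) s = flow q β t μ s := by
  intro s hs
  induction s, hs using Nat.le_induction with
  | base => exact flow_of_le le_rfl
  | succ n hn ih =>
    rw [flow_succ_of_le hn, flow_succ_of_le (le_trans h1 hn), ih, heq n hn]

end MFGSetValue

set_option linter.unusedSectionVars false

namespace MFGSetValue

variable {S A : Type*} [Fintype S] [DecidableEq S]
variable {q : ℕ → S → (S → ℝ) → A → S → ℝ} {F : ℕ → S → (S → ℝ) → A → ℝ}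

lemma isProb_flow (hq0 : ∀ s x (μ : S → ℝ) a y, IsProb μ → 0 ≤ q s x μ a y)
    (hqsum : ∀ s x (μ : S → ℝ) a, IsProb μ → ∑ y, q s x μ a y = 1)
    {α : ℕ → S → A} {t : ℕ} {μ : S → ℝ} (hμ : IsProb μ) :
    ∀ s, IsProb (flow q α t μ s) := by
  intro s
  induction s with
  | zero => exact hμ
  | succ n ih =>
    by_cases hn : n + 1 ≤ t
    · rw [flow_of_le hn]; exact hμ
    · rw [flow_succ_of_le (by omega)]
      constructor
      · intro y
        exact Finset.sum_nonneg fun x _ => mul_nonneg (ih.1 x) (hq0 _ _ _ _ _ ih)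
      · rw [Finset.sum_comm]
        calc ∑ x, ∑ y, flow q α t μ n x * q n x (flow q α t μ n) (α n x) y
            = ∑ x, flow q α t μ n x := by
              refine Finset.sum_congr rfl fun x _ => ?_
              rw [← Finset.mul_sum, hqsum _ _ _ _ ih, mul_one]
          _ = 1 := ih.2

lemma isProb_chain (hq0 : ∀ s x (μ : S → ℝ) a y, IsProb μ → 0 ≤ q s x μ a y)
    (hqsum : ∀ s x (μ : S → ℝ) a, IsProb μ → ∑ y, q s x μ a y = 1)
    {ν : ℕ → S → ℝ} {αt : ℕ → S → A} {t : ℕ} (x₀ : S)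
    (hν : ∀ r, IsProb (ν r)) : ∀ s, IsProb (chain q ν αt t x₀ s) := by
  have hδ : IsProb (fun x : S => if x = x₀ then (1:ℝ) else 0) := by
    constructor
    · intro x; dsimp only; split <;> norm_num
    · simp
  intro s
  induction s with
  | zero => exact hδ
  | succ n ih =>
    by_cases hn : n + 1 ≤ t
    · rw [chain_of_le hn]; exact hδ
    · rw [chain_succ_of_le (by omega : t ≤ n)]
      constructor
      · intro y
        exact Finset.sum_nonneg fun x _ => mul_nonneg (ih.1 x) (hq0 _ _ _ _ _ (hν n))
      · rw [Finset.sum_comm]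
        calc ∑ x, ∑ y, chain q ν αt t x₀ n x * q n x (ν n) (αt n x) y
            = ∑ x, chain q ν αt t x₀ n x := by
              refine Finset.sum_congr rfl fun x _ => ?_
              rw [← Finset.mul_sum, hqsum _ _ _ _ (hν n), mul_one]
          _ = 1 := ih.2

lemma chain_lb (hq0 : ∀ s x (μ : S → ℝ) a y, IsProb μ → 0 ≤ q s x μ a y)
    (hqsum : ∀ s x (μ : S → ℝ) a, IsProb μ → ∑ y, q s x μ a y = 1)
    {cq : ℝ} (hqlb : ∀ s x (μ : S → ℝ) a y, IsProb μ → cq ≤ q s x μ a y)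
    {ν : ℕ → S → ℝ} {αt : ℕ → S → A} {t s : ℕ} (x₀ y : S)
    (hν : ∀ r, IsProb (ν r)) (hts : t < s) :
    cq ≤ chain q ν αt t x₀ s y := by
  obtain ⟨n, rfl⟩ : ∃ n, s = n + 1 := ⟨s - 1, by omega⟩
  rw [chain_succ_of_le (by omega : t ≤ n)]
  dsimp only
  have hc := isProb_chain (q := q) hq0 hqsum x₀ hν n (ν := ν) (αt := αt) (t := t)
  calc cq = ∑ x, chain q ν αt t x₀ n x * cq := by rw [← Finset.sum_mul, hc.2, one_mul]
    _ ≤ ∑ x, chain q ν αt t x₀ n x * q n x (ν n) (αt n x) y :=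
        Finset.sum_le_sum fun x _ => mul_le_mul_of_nonneg_left (hqlb _ _ _ _ _ (hν n)) (hc.1 x)

lemma chain_restart {ν : ℕ → S → ℝ} {αt : ℕ → S → A} {t T₀ : ℕ} (x : S)
    (h1 : t ≤ T₀) :
    ∀ s, T₀ ≤ s → ∀ z, chain q ν αt t x s z =
      ∑ y, chain q ν αt t x T₀ y * chain q ν αt T₀ y s z := by
  intro s hs
  induction s, hs using Nat.le_induction with
  | base =>
    intro z
    simp only [chain_of_le (le_refl T₀)]
    simp [mul_comm]
  | succ n hn ih =>
    intro z
    rw [chain_succ_of_le (le_trans h1 hn) x]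
    dsimp only
    calc ∑ w, chain q ν αt t x n w * q n w (ν n) (αt n w) z
        = ∑ w, (∑ y, chain q ν αt t x T₀ y * chain q ν αt T₀ y n w) * q n w (ν n) (αt n w) z := by
          refine Finset.sum_congr rfl fun w _ => by rw [ih w]
      _ = ∑ y, chain q ν αt t x T₀ y * ∑ w, chain q ν αt T₀ y n w * q n w (ν n) (αt n w) z := by
          simp_rw [Finset.sum_mul, Finset.mul_sum, mul_assoc]
          rw [Finset.sum_comm]
      _ = ∑ y, chain q ν αt t x T₀ y * chain q ν αt T₀ y (n + 1) z := by
          refine Finset.sum_congr rfl fun y _ => ?_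
          rw [chain_succ_of_le hn y]

end MFGSetValue

namespace MFGSetValue

variable {S A : Type*} [Fintype S] [DecidableEq S]
variable {q : ℕ → S → (S → ℝ) → A → S → ℝ} {F : ℕ → S → (S → ℝ) → A → ℝ}

/-- cost depends only on `ν` on `[t,H]`, `αt` on `[t,H)`, and the terminal
function through its values at `ν H`. -/
lemma cost_congr {Gt Gt' : S → (S → ℝ) → ℝ} {ν ν' : ℕ → S → ℝ} {αt αt' : ℕ → S → A}
    {t H : ℕ} (x : S)
    (hν : ∀ r, t ≤ r → r ≤ H → ν r = ν' r)
    (hα : ∀ r, t ≤ r → r < H → αt r = αt' r)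
    (hG : ∀ z, Gt z (ν H) = Gt' z (ν' H)) :
    cost q F H Gt ν t x αt = cost q F H Gt' ν' t x αt' := by
  unfold cost
  have hch : ∀ s, s ≤ H → chain q ν αt t x s = chain q ν' αt' t x s := fun s hs =>
    chain_congr x s (fun r h1 h2 => ⟨hν r h1 (by omega), hα r h1 (by omega)⟩)
  congr 1
  · refine Finset.sum_congr rfl fun z _ => ?_
    rw [hch H le_rfl, hG]
  · refine Finset.sum_congr rfl fun s hs => ?_
    rw [Finset.mem_Ico] at hs
    refine Finset.sum_congr rfl fun z _ => ?_
    rw [hch s (by omega), hν s hs.1 (by omega), hα s hs.1 hs.2]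

lemma cost_at_horizon {Gt : S → (S → ℝ) → ℝ} {ν : ℕ → S → ℝ} {αt : ℕ → S → A}
    {H : ℕ} (x : S) : cost q F H Gt ν H x αt = Gt x (ν H) := by
  unfold cost
  rw [chain_of_le le_rfl, Finset.Ico_self, Finset.sum_empty, add_zero]
  simp

/-- Decomposition of the cost at an intermediate time `T₀`. -/
lemma cost_decomp {Gt : S → (S → ℝ) → ℝ} {ν : ℕ → S → ℝ} {αt : ℕ → S → A}
    {t T₀ H : ℕ} (x : S) (h1 : t ≤ T₀) (h2 : T₀ ≤ H) :
    cost q F H Gt ν t x αt =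
      (∑ y, chain q ν αt t x T₀ y * cost q F H Gt ν T₀ y αt) +
      ∑ s ∈ Finset.Ico t T₀, ∑ z, chain q ν αt t x s z * F s z (ν s) (αt s z) := by
  unfold cost
  have key : ∑ y, chain q ν αt t x T₀ y *
      ((∑ z, chain q ν αt T₀ y H z * Gt z (ν H)) +
        ∑ s ∈ Finset.Ico T₀ H, ∑ z, chain q ν αt T₀ y s z * F s z (ν s) (αt s z)) =
      (∑ z, chain q ν αt t x H z * Gt z (ν H)) +
        ∑ s ∈ Finset.Ico T₀ H, ∑ z, chain q ν αt t x s z * F s z (ν s) (αt s z) := by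
    simp_rw [mul_add]
    rw [Finset.sum_add_distrib]
    congr 1
    · simp_rw [Finset.mul_sum, ← mul_assoc]
      rw [Finset.sum_comm]
      refine Finset.sum_congr rfl fun z _ => ?_
      rw [← Finset.sum_mul, ← chain_restart x h1 H h2 z]
    · simp_rw [Finset.mul_sum]
      rw [Finset.sum_comm]
      refine Finset.sum_congr rfl fun s hs => ?_
      rw [Finset.mem_Ico] at hs
      rw [Finset.sum_comm]
      refine Finset.sum_congr rfl fun z _ => ?_
      rw [chain_restart x h1 s hs.1 z, Finset.sum_mul]
      exact Finset.sum_congr rfl fun y _ => by ring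
  rw [key, ← Finset.sum_Ico_consecutive _ h1 h2]
  ring

/-- One-step Bellman recursion for the cost. -/
lemma cost_step {Gt : S → (S → ℝ) → ℝ} {ν : ℕ → S → ℝ} {αt : ℕ → S → A}
    {t H : ℕ} (x : S) (h : t < H) :
    cost q F H Gt ν t x αt =
      F t x (ν t) (αt t x) +
        ∑ y, q t x (ν t) (αt t x) y * cost q F H Gt ν (t + 1) y αt := by
  rw [cost_decomp x (Nat.le_succ t) h]
  have h1 : ∀ y, chain q ν αt t x (t + 1) y = q t x (ν t) (αt t x) y := by
    intro y
    rw [chain_succ_of_le le_rfl]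
    dsimp only
    rw [Finset.sum_eq_single x (fun w _ hw => by rw [chain_of_le le_rfl]; simp [hw])
      (fun hx => absurd (Finset.mem_univ x) hx)]
    rw [chain_of_le le_rfl]; simp
  have h2 : ∑ s ∈ Finset.Ico t (t + 1), ∑ z, chain q ν αt t x s z * F s z (ν s) (αt s z)
      = F t x (ν t) (αt t x) := by
    rw [Finset.sum_Ico_succ_top le_rfl, Finset.Ico_self, Finset.sum_empty, zero_add]
    rw [Finset.sum_eq_single x (fun w _ hw => by rw [chain_of_le le_rfl]; simp [hw])
      (fun hx => absurd (Finset.mem_univ x) hx)]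
    rw [chain_of_le le_rfl]; simp
  rw [h2, add_comm]
  congr 1
  refine Finset.sum_congr rfl fun y _ => by rw [h1 y]

end MFGSetValue

namespace MFGSetValue

variable {S A : Type*} [Fintype S] [DecidableEq S]
variable {q : ℕ → S → (S → ℝ) → A → S → ℝ} {F : ℕ → S → (S → ℝ) → A → ℝ}

lemma neg_abs_le_mul {p c : ℝ} (h0 : 0 ≤ p) (h1 : p ≤ 1) : -|c| ≤ p * c := by
  rcases abs_cases c with ⟨h, _⟩ | ⟨h, _⟩ <;> nlinarith

lemma bddBelow_costSet
    (hq0 : ∀ s x (μ : S → ℝ) a y, IsProb μ → 0 ≤ q s x μ a y)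
    (hqsum : ∀ s x (μ : S → ℝ) a, IsProb μ → ∑ y, q s x μ a y = 1)
    (hF : ∀ s x (μ : S → ℝ), BddBelow (Set.range fun a : A => F s x μ a))
    {Gt : S → (S → ℝ) → ℝ} {ν : ℕ → S → ℝ} {t H : ℕ} (x : S)
    (hν : ∀ r, IsProb (ν r)) :
    BddBelow { r : ℝ | ∃ αt : ℕ → S → A, r = cost q F H Gt ν t x αt } := by
  set b : ℕ → S → ℝ := fun s z => (hF s z (ν s)).choose with hb
  have hbspec : ∀ s z (a : A), b s z ≤ F s z (ν s) a := by
    intro s z a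
    exact (hF s z (ν s)).choose_spec (Set.mem_range_self a)
  refine ⟨(∑ z, -|Gt z (ν H)|) + ∑ s ∈ Finset.Ico t H, ∑ z, -|b s z|, ?_⟩
  rintro r ⟨αt, rfl⟩
  have hc : ∀ s, IsProb (chain q ν αt t x s) := isProb_chain hq0 hqsum x hν
  have hc01 : ∀ s z, 0 ≤ chain q ν αt t x s z ∧ chain q ν αt t x s z ≤ 1 := by
    intro s z
    refine ⟨(hc s).1 z, ?_⟩
    calc chain q ν αt t x s z ≤ ∑ w, chain q ν αt t x s w :=
          Finset.single_le_sum (fun w _ => (hc s).1 w) (Finset.mem_univ z)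
      _ = 1 := (hc s).2
  unfold cost
  gcongr with z _ s hs z _
  · exact neg_abs_le_mul (hc01 H z).1 (hc01 H z).2
  · calc -|b s z| ≤ chain q ν αt t x s z * b s z :=
          neg_abs_le_mul (hc01 s z).1 (hc01 s z).2
      _ ≤ chain q ν αt t x s z * F s z (ν s) (αt s z) :=
          mul_le_mul_of_nonneg_left (hbspec s z _) (hc01 s z).1

lemma value_le_cost
    (hq0 : ∀ s x (μ : S → ℝ) a y, IsProb μ → 0 ≤ q s x μ a y)
    (hqsum : ∀ s x (μ : S → ℝ) a, IsProb μ → ∑ y, q s x μ a y = 1)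
    (hF : ∀ s x (μ : S → ℝ), BddBelow (Set.range fun a : A => F s x μ a))
    {Gt : S → (S → ℝ) → ℝ} {ν : ℕ → S → ℝ} {t H : ℕ} (x : S)
    (hν : ∀ r, IsProb (ν r)) (αt : ℕ → S → A) :
    value q F H Gt ν t x ≤ cost q F H Gt ν t x αt :=
  csInf_le (bddBelow_costSet hq0 hqsum hF x hν) ⟨αt, rfl⟩

lemma le_value [Nonempty A] {Gt : S → (S → ℝ) → ℝ} {ν : ℕ → S → ℝ} {t H : ℕ} (x : S)
    {c : ℝ} (h : ∀ αt : ℕ → S → A, c ≤ cost q F H Gt ν t x αt) :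
    c ≤ value q F H Gt ν t x := by
  refine le_csInf ⟨cost q F H Gt ν t x (Classical.arbitrary _), _, rfl⟩ ?_
  rintro r ⟨αt, rfl⟩
  exact h αt

/-- The one-step Bellman set. -/
def stepSet (q : ℕ → S → (S → ℝ) → A → S → ℝ) (F : ℕ → S → (S → ℝ) → A → ℝ)
    (ν : ℕ → S → ℝ) (s : ℕ) (x : S) (w : S → ℝ) : Set ℝ :=
  { r : ℝ | ∃ a : A, r = F s x (ν s) a + ∑ y, q s x (ν s) a y * w y }

/-- Backward Bellman value function: `bell k` is the value with `k` steps remaining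
(i.e. at time `H - k`). -/
noncomputable def bell (q : ℕ → S → (S → ℝ) → A → S → ℝ) (F : ℕ → S → (S → ℝ) → A → ℝ)
    (ν : ℕ → S → ℝ) (g : S → ℝ) (H : ℕ) : ℕ → S → ℝ
  | 0 => g
  | k + 1 => fun x => sInf (stepSet q F ν (H - (k + 1)) x (bell q F ν g H k))

lemma stepSet_nonempty [Nonempty A] {ν : ℕ → S → ℝ} {s : ℕ} {x : S} {w : S → ℝ} :
    (stepSet q F ν s x w).Nonempty :=
  ⟨_, Classical.arbitrary A, rfl⟩

lemma stepSet_bddBelow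
    (hq0 : ∀ s x (μ : S → ℝ) a y, IsProb μ → 0 ≤ q s x μ a y)
    (hq1 : ∀ s x (μ : S → ℝ) a y, IsProb μ → q s x μ a y < 1)
    (hF : ∀ s x (μ : S → ℝ), BddBelow (Set.range fun a : A => F s x μ a))
    {ν : ℕ → S → ℝ} {s : ℕ} {x : S} {w : S → ℝ} (hν : ∀ r, IsProb (ν r)) :
    BddBelow (stepSet q F ν s x w) := by
  refine ⟨(hF s x (ν s)).choose + ∑ y, -|w y|, ?_⟩
  rintro r ⟨a, rfl⟩
  gcongr
  · exact (hF s x (ν s)).choose_spec (Set.mem_range_self a)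
  · exact neg_abs_le_mul (hq0 _ _ _ _ _ (hν s)) (le_of_lt (hq1 _ _ _ _ _ (hν s)))

lemma bell_le_cost [Nonempty A]
    (hq0 : ∀ s x (μ : S → ℝ) a y, IsProb μ → 0 ≤ q s x μ a y)
    (hq1 : ∀ s x (μ : S → ℝ) a y, IsProb μ → q s x μ a y < 1)
    (hqsum : ∀ s x (μ : S → ℝ) a, IsProb μ → ∑ y, q s x μ a y = 1)
    (hF : ∀ s x (μ : S → ℝ), BddBelow (Set.range fun a : A => F s x μ a))
    {Gt : S → (S → ℝ) → ℝ} {ν : ℕ → S → ℝ} {H : ℕ} (hν : ∀ r, IsProb (ν r)) :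
    ∀ k, k ≤ H → ∀ (x : S) (αt : ℕ → S → A),
      bell q F ν (fun z => Gt z (ν H)) H k x ≤ cost q F H Gt ν (H - k) x αt := by
  intro k
  induction k with
  | zero =>
    intro _ x αt
    simp only [Nat.sub_zero, bell]
    rw [cost_at_horizon]
  | succ k ih =>
    intro hk x αt
    have hsH : H - (k + 1) < H := by omega
    have hs1 : H - (k + 1) + 1 = H - k := by omega
    rw [cost_step x hsH]
    calc bell q F ν (fun z => Gt z (ν H)) H (k + 1) x
        ≤ F (H - (k+1)) x (ν (H - (k+1))) (αt (H - (k+1)) x) +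
          ∑ y, q (H - (k+1)) x (ν (H - (k+1))) (αt (H - (k+1)) x) y *
            bell q F ν (fun z => Gt z (ν H)) H k y :=
          csInf_le (stepSet_bddBelow hq0 hq1 hF hν) ⟨αt (H - (k+1)) x, rfl⟩
      _ ≤ _ := by
          refine add_le_add_right (Finset.sum_le_sum fun y _ => ?_) _
          rw [hs1]
          exact mul_le_mul_of_nonneg_left (ih (by omega) y αt) (hq0 _ _ _ _ _ (hν _))

end MFGSetValue

namespace MFGSetValue

variable {S A : Type*} [Fintype S] [DecidableEq S]
variable {q : ℕ → S → (S → ℝ) → A → S → ℝ} {F : ℕ → S → (S → ℝ) → A → ℝ}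

/-- Existence of a single control that is `H·δ`-optimal simultaneously from every
state at a given time `T₀`, for a fixed flow `ν`. -/
lemma exists_uniform_optimal [Nonempty A]
    (hq0 : ∀ s x (μ : S → ℝ) a y, IsProb μ → 0 ≤ q s x μ a y)
    (hq1 : ∀ s x (μ : S → ℝ) a y, IsProb μ → q s x μ a y < 1)
    (hqsum : ∀ s x (μ : S → ℝ) a, IsProb μ → ∑ y, q s x μ a y = 1)
    (hF : ∀ s x (μ : S → ℝ), BddBelow (Set.range fun a : A => F s x μ a))
    {Gt : S → (S → ℝ) → ℝ} {ν : ℕ → S → ℝ} {H T₀ : ℕ} (hν : ∀ r, IsProb (ν r))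
    (hT₀ : T₀ ≤ H) {δ : ℝ} (hδ : 0 < δ) :
    ∃ αu : ℕ → S → A, ∀ (y : S) (γ : ℕ → S → A),
      cost q F H Gt ν T₀ y αu ≤ cost q F H Gt ν T₀ y γ + (H : ℝ) * δ := by
  set g : S → ℝ := fun z => Gt z (ν H) with hg
  have hex : ∀ s x, s < H → ∃ a : A,
      F s x (ν s) a + ∑ y, q s x (ν s) a y * bell q F ν g H (H - (s + 1)) y <
        bell q F ν g H (H - s) x + δ := by
    intro s x hs
    have h1 : H - s = (H - (s + 1)) + 1 := by omega
    have h2 : H - ((H - (s + 1)) + 1) = s := by omega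
    rw [h1]
    have hne : (stepSet q F ν (H - ((H - (s+1)) + 1)) x (bell q F ν g H (H - (s+1)))).Nonempty :=
      stepSet_nonempty
    obtain ⟨r, ⟨a, rfl⟩, hr⟩ := Real.lt_sInf_add_pos hne hδ
    rw [h2] at hr
    exact ⟨a, by simpa [bell, h2] using hr⟩
  classical
  set αu : ℕ → S → A := fun s x =>
    if h : s < H then (hex s x h).choose else Classical.arbitrary A with hαu
  have key : ∀ k, k ≤ H → ∀ x,
      cost q F H Gt ν (H - k) x αu ≤ bell q F ν g H k x + (k : ℝ) * δ := by
    intro k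
    induction k with
    | zero =>
      intro _ x
      simp only [Nat.sub_zero, bell, Nat.cast_zero, zero_mul, add_zero]
      rw [cost_at_horizon]
    | succ k ih =>
      intro hk x
      have hsH : H - (k + 1) < H := by omega
      have hs1 : H - (k + 1) + 1 = H - k := by omega
      have hs2 : H - (H - (k + 1) + 1) = k := by omega
      have hs3 : H - (H - (k + 1)) = k + 1 := by omega
      rw [cost_step x hsH]
      have ha : αu (H - (k + 1)) x = (hex (H - (k + 1)) x hsH).choose := by
        rw [hαu]; simp [hsH]
      have hspec := (hex (H - (k + 1)) x hsH).choose_spec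
      rw [← ha] at hspec
      rw [hs2, hs3] at hspec
      have hqs := hqsum (H - (k+1)) x (ν (H - (k+1))) (αu (H - (k+1)) x) (hν _)
      calc F (H - (k+1)) x (ν (H - (k+1))) (αu (H - (k+1)) x) +
            ∑ y, q (H - (k+1)) x (ν (H - (k+1))) (αu (H - (k+1)) x) y *
              cost q F H Gt ν (H - (k+1) + 1) y αu
          ≤ F (H - (k+1)) x (ν (H - (k+1))) (αu (H - (k+1)) x) +
            ∑ y, q (H - (k+1)) x (ν (H - (k+1))) (αu (H - (k+1)) x) y *
              (bell q F ν g H k y + (k : ℝ) * δ) := by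
            refine add_le_add_right (Finset.sum_le_sum fun y _ => ?_) _
            rw [hs1]
            exact mul_le_mul_of_nonneg_left (ih (by omega) y) (hq0 _ _ _ _ _ (hν _))
        _ = (F (H - (k+1)) x (ν (H - (k+1))) (αu (H - (k+1)) x) +
              ∑ y, q (H - (k+1)) x (ν (H - (k+1))) (αu (H - (k+1)) x) y *
                bell q F ν g H k y) + (k : ℝ) * δ := by
            simp_rw [mul_add, Finset.sum_add_distrib, ← Finset.sum_mul, hqs, one_mul]
            ring
        _ ≤ (bell q F ν g H (k + 1) x + δ) + (k : ℝ) * δ := by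
            exact add_le_add_left (le_of_lt hspec) _
        _ = bell q F ν g H (k + 1) x + ((k : ℝ) + 1) * δ := by ring
        _ = bell q F ν g H (k + 1) x + ((k + 1 : ℕ) : ℝ) * δ := by push_cast; ring
  refine ⟨αu, fun y γ => ?_⟩
  have h1 := key (H - T₀) (by omega) y
  rw [(by omega : H - (H - T₀) = T₀)] at h1
  have h2 := bell_le_cost (H := H) (Gt := Gt) hq0 hq1 hqsum hF hν (H - T₀) (Nat.sub_le H T₀) y γ
  rw [(by omega : H - (H - T₀) = T₀)] at h2
  have h3 : ((H - T₀ : ℕ) : ℝ) * δ ≤ (H : ℝ) * δ :=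
    mul_le_mul_of_nonneg_right (by exact_mod_cast Nat.sub_le H T₀) hδ.le
  linarith

end MFGSetValue

namespace MFGSetValue

variable {S A : Type*} [Fintype S] [DecidableEq S]
variable {q : ℕ → S → (S → ℝ) → A → S → ℝ} {F : ℕ → S → (S → ℝ) → A → ℝ}

/-- Decomposition of the cost at an intermediate time, with the pre-`T₀` data
replaced by any flow/control agreeing with it below `T₀`. -/
lemma cost_decomp' {Gt : S → (S → ℝ) → ℝ} {ν ν₀ : ℕ → S → ℝ} {αt α₀ : ℕ → S → A}
    {t T₀ H : ℕ} (x : S) (h1 : t ≤ T₀) (h2 : T₀ ≤ H)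
    (hν : ∀ r, t ≤ r → r < T₀ → ν r = ν₀ r) (hα : ∀ r, t ≤ r → r < T₀ → αt r = α₀ r) :
    cost q F H Gt ν t x αt =
      (∑ y, chain q ν₀ α₀ t x T₀ y * cost q F H Gt ν T₀ y αt) +
      ∑ s ∈ Finset.Ico t T₀, ∑ z, chain q ν₀ α₀ t x s z * F s z (ν₀ s) (α₀ s z) := by
  rw [cost_decomp x h1 h2]
  congr 1
  · refine Finset.sum_congr rfl fun y _ => ?_
    rw [chain_congr x T₀ (fun r hr1 hr2 => ⟨hν r hr1 hr2, hα r hr1 hr2⟩)]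
  · refine Finset.sum_congr rfl fun s hs => ?_
    rw [Finset.mem_Ico] at hs
    refine Finset.sum_congr rfl fun z _ => ?_
    rw [chain_congr x s (fun r hr1 hr2 => ⟨hν r hr1 (by omega), hα r hr1 (by omega)⟩),
      hν s hs.1 hs.2, hα s hs.1 hs.2]

end MFGSetValue

set_option maxHeartbeats 1000000 in
/-- Theorem 2.8, DPP for the set value.  Assume `q ≥ c_q > 0`.  For
`0 ≤ t < T₀ ≤ T` and `μ ∈ 𝒫₀(𝕊)`,
`𝕍_state(t,μ) = ⋂_{ε>0} { φ : ‖φ − J(T₀,ψ;t,μ,α*;·,α*)‖_∞ ≤ ε` for some `ψ, α*` with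
`ψ(·,μ^{α*}_{T₀}) ∈ 𝕍^ε_state(T₀,μ^{α*}_{T₀})` and `α* ∈ ℳ^ε_state(T₀,ψ;t,μ) }`. -/
theorem set_value_DPP
    {S A : Type*} [Fintype S] [DecidableEq S] [Nonempty A]
    (T : ℕ) (q : ℕ → S → (S → ℝ) → A → S → ℝ)
    (F : ℕ → S → (S → ℝ) → A → ℝ) (G : S → (S → ℝ) → ℝ)
    (cq : ℝ) (hcq : 0 < cq)
    (hqlb : ∀ s x μ a y, IsProb μ → cq ≤ q s x μ a y)
    (hq1 : ∀ s x μ a y, IsProb μ → q s x μ a y < 1)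
    (hqsum : ∀ s x μ a, IsProb μ → ∑ y, q s x μ a y = 1)
    (hF : ∀ s x (μ : S → ℝ), BddBelow (Set.range fun a : A => F s x μ a))
    (t T₀ : ℕ) (htT₀ : t < T₀) (hT₀T : T₀ ≤ T)
    (μ : S → ℝ) (hμ : IsProb μ) (hμfull : ∀ x, 0 < μ x) :
    setValue q F G T t μ =
      ⋂ (ε : ℝ) (_ : 0 < ε),
        { φ | ∃ (ψ : S → (S → ℝ) → ℝ) (α : ℕ → S → A),
            (∀ x, |φ x - cost q F T₀ ψ (flow q α t μ) t x α| ≤ ε) ∧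
            (fun y => ψ y (flow q α t μ T₀)) ∈ setValueEps q F G T ε T₀ (flow q α t μ T₀) ∧
            isMFEeps q F T₀ ψ ε t μ α } := by
  classical
  have hq0 : ∀ s x (μ' : S → ℝ) a y, IsProb μ' → 0 ≤ q s x μ' a y :=
    fun s x μ' a y h => hcq.le.trans (hqlb s x μ' a y h)
  have hcq1 : cq < 1 := by
    rcases Finset.univ.eq_empty_or_nonempty (α := S) with he | ⟨x0, _⟩
    · exfalso; have := hμ.2; rw [he, Finset.sum_empty] at this; norm_num at this
    · exact (hqlb 0 x0 μ (Classical.arbitrary A) x0 hμ).trans_lt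
        (hq1 0 x0 μ (Classical.arbitrary A) x0 hμ)
  ext φ
  simp only [setValue, Set.mem_iInter, Set.mem_setOf_eq]
  constructor
  · -- ⊆ : from the set value to the DPP set
    intro hφ ε hε
    set δ : ℝ := min ε (ε * cq / 4) with hδdef
    have hδpos : 0 < δ := lt_min hε (by positivity)
    have hδε : δ ≤ ε := min_le_left _ _
    have hδcq : δ ≤ ε * cq / 4 := min_le_right _ _
    obtain ⟨α, hMFE, hclose⟩ := hφ δ hδpos
    set ν : ℕ → S → ℝ := flow q α t μ with hνdef
    have hνP : ∀ r, IsProb (ν r) := isProb_flow hq0 hqsum hμ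
    have costconcat : ∀ (γ : ℕ → S → A) (x : S),
        cost q F T G ν t x (concat T₀ γ α) =
          cost q F T₀ (fun y _ => cost q F T G ν T₀ y α) ν t x γ := by
      intro γ x
      rw [cost_decomp' (ν₀ := ν) (α₀ := γ) x htT₀.le hT₀T (fun _ _ _ => rfl)
        (fun r _ hr => funext fun z => by simp [concat, hr])]
      show _ = (∑ y, chain q ν γ t x T₀ y * cost q F T G ν T₀ y α) + _
      congr 1
      refine Finset.sum_congr rfl fun y _ => ?_
      congr 1
      exact cost_congr y (fun _ _ _ => rfl)
        (fun r hr _ => funext fun z => by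
          simp only [concat, if_neg (show ¬ r < T₀ by omega)])
        (fun z => rfl)
    have hcc : concat T₀ α α = α := by funext s z; simp [concat]
    have identity0 : ∀ x, cost q F T₀ (fun y _ => cost q F T G ν T₀ y α) ν t x α
        = cost q F T G ν t x α := by
      intro x; rw [← costconcat α x, hcc]
    refine ⟨fun y _ => cost q F T G ν T₀ y α, α, ?_, ?_, ?_⟩
    · -- closeness
      intro x
      rw [← hνdef, identity0 x]
      exact (hclose x).trans hδε
    · -- membership of the terminal function in the set value at (T₀, ν T₀)
      rw [← hνdef]
      have hν' : ∀ s, T₀ ≤ s → flow q α T₀ (ν T₀) s = ν s :=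
        flow_restart htT₀.le (fun r _ => rfl)
      have hcostν' : ∀ (y : S) (γ : ℕ → S → A),
          cost q F T G (flow q α T₀ (ν T₀)) T₀ y γ = cost q F T G ν T₀ y γ :=
        fun y γ => cost_congr y (fun r h1 _ => hν' r h1) (fun _ _ _ => rfl)
          (fun z => by rw [hν' T hT₀T])
      have hval' : ∀ y : S, value q F T G (flow q α T₀ (ν T₀)) T₀ y
          = value q F T G ν T₀ y := by
        intro y
        unfold value
        congr 1
        ext r
        exact exists_congr fun γ => by rw [hcostν' y γ]
      -- the key uniform near-optimality of α at time T₀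
      have key : ∀ (y₀ : S) (γ : ℕ → S → A),
          cost q F T G ν T₀ y₀ α ≤ cost q F T G ν T₀ y₀ γ + ε := by
        set δ' : ℝ := ε * cq / (4 * ((T : ℝ) + 1)) with hδ'def
        have hδ'pos : 0 < δ' := by positivity
        obtain ⟨αu, hαu⟩ := exists_uniform_optimal (Gt := G) hq0 hq1 hqsum hF hνP hT₀T hδ'pos
        have hKδ : (T : ℝ) * δ' ≤ ε * cq / 4 := by
          have hT1 : (0:ℝ) < (T : ℝ) + 1 := by positivity
          calc (T:ℝ) * δ' = (ε * cq / 4) * ((T:ℝ) / ((T:ℝ) + 1)) := by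
                rw [hδ'def]; field_simp
            _ ≤ (ε * cq / 4) * 1 := by
                refine mul_le_mul_of_nonneg_left ?_ (by positivity)
                rw [div_le_one hT1]; linarith
            _ = ε * cq / 4 := mul_one _
        intro y₀ γ
        have hβlow : ∀ r, r < T₀ → concat T₀ α αu r = α r :=
          fun r hr => funext fun z => by simp [concat, hr]
        have hβhigh : ∀ r, T₀ ≤ r → concat T₀ α αu r = αu r :=
          fun r hr => funext fun z => by
            simp only [concat, if_neg (show ¬ r < T₀ by omega)]
        have hcostβ : ∀ y, cost q F T G ν T₀ y (concat T₀ α αu) = cost q F T G ν T₀ y αu :=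
          fun y => cost_congr y (fun _ _ _ => rfl) (fun r hr _ => hβhigh r hr) (fun z => rfl)
        have hpP : IsProb (chain q ν α t y₀ T₀) := isProb_chain hq0 hqsum y₀ hνP T₀
        have hplb : cq ≤ chain q ν α t y₀ T₀ y₀ := chain_lb hq0 hqsum hqlb y₀ y₀ hνP htT₀
        have hdecα := cost_decomp (q := q) (F := F) (Gt := G) (ν := ν) (αt := α)
          y₀ htT₀.le hT₀T
        have hdecβ := cost_decomp' (q := q) (F := F) (Gt := G) (ν := ν) (ν₀ := ν)
          (αt := concat T₀ α αu) (α₀ := α) y₀ htT₀.le hT₀T (fun _ _ _ => rfl)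
          (fun r _ hr => hβlow r hr)
        have e1 : cost q F T G ν t y₀ α - cost q F T G ν t y₀ (concat T₀ α αu)
            = ∑ y, chain q ν α t y₀ T₀ y *
                (cost q F T G ν T₀ y α - cost q F T G ν T₀ y αu) := by
          rw [hdecα, hdecβ]
          simp_rw [hcostβ, mul_sub, Finset.sum_sub_distrib]
          ring
        have hMFEx := hMFE y₀
        rw [← hνdef] at hMFEx
        have hvalβ := value_le_cost (H := T) (Gt := G) (t := t) hq0 hqsum hF y₀ hνP (concat T₀ α αu)
        have hsum : ∑ y, chain q ν α t y₀ T₀ y *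
            (cost q F T G ν T₀ y α - cost q F T G ν T₀ y αu) ≤ δ := by
          rw [← e1]; linarith
        have hsingle : chain q ν α t y₀ T₀ y₀ *
            (cost q F T G ν T₀ y₀ α - cost q F T G ν T₀ y₀ αu) ≤ δ + (T:ℝ) * δ' := by
          have hsplit := Finset.add_sum_erase Finset.univ
            (fun y => chain q ν α t y₀ T₀ y *
              (cost q F T G ν T₀ y α - cost q F T G ν T₀ y αu)) (Finset.mem_univ y₀)
          have h4 : ∑ y ∈ Finset.univ.erase y₀, chain q ν α t y₀ T₀ y ≤ 1 := by
            have h5 := Finset.sum_erase_add Finset.univ (chain q ν α t y₀ T₀)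
              (Finset.mem_univ y₀)
            have h6 := hpP.1 y₀
            have h7 := hpP.2
            linarith
          have h6 : 0 ≤ ∑ y ∈ Finset.univ.erase y₀, chain q ν α t y₀ T₀ y :=
            Finset.sum_nonneg fun y _ => hpP.1 y
          have hlow : ∑ y ∈ Finset.univ.erase y₀,
              (-((T:ℝ) * δ' * chain q ν α t y₀ T₀ y)) ≤
              ∑ y ∈ Finset.univ.erase y₀, chain q ν α t y₀ T₀ y *
                (cost q F T G ν T₀ y α - cost q F T G ν T₀ y αu) := by
            refine Finset.sum_le_sum fun y _ => ?_
            have h1 := hαu y α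
            have h2 := hpP.1 y
            nlinarith
          have h8 : ∑ y ∈ Finset.univ.erase y₀,
              (-((T:ℝ) * δ' * chain q ν α t y₀ T₀ y)) =
              -((T:ℝ) * δ' * ∑ y ∈ Finset.univ.erase y₀, chain q ν α t y₀ T₀ y) := by
            rw [Finset.sum_neg_distrib, Finset.mul_sum]
          rw [h8] at hlow
          have h9 : -((T:ℝ) * δ') ≤
              -((T:ℝ) * δ' * ∑ y ∈ Finset.univ.erase y₀, chain q ν α t y₀ T₀ y) := by
            have h10 : 0 ≤ (T:ℝ) * δ' := by positivity
            nlinarith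
          linarith [hsplit, hsum, hlow, h9]
        have hd : cq * (cost q F T G ν T₀ y₀ α - cost q F T G ν T₀ y₀ αu)
            ≤ δ + (T:ℝ) * δ' := by
          rcases le_or_gt (cost q F T G ν T₀ y₀ α - cost q F T G ν T₀ y₀ αu) 0 with h | h
          · have h10 : 0 ≤ (T:ℝ) * δ' := by positivity
            nlinarith
          · nlinarith [hsingle, hplb, h]
        have h7 := hαu y₀ γ
        have h8 : cq * (cost q F T G ν T₀ y₀ α - cost q F T G ν T₀ y₀ αu)
            ≤ cq * (ε / 2) := by nlinarith [hd, hδcq, hKδ]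
        have h9 : cost q F T G ν T₀ y₀ α - cost q F T G ν T₀ y₀ αu ≤ ε / 2 :=
          le_of_mul_le_mul_left h8 hcq
        have h10 : (T:ℝ) * δ' ≤ ε / 4 := by nlinarith [hKδ, hcq1, hε]
        linarith
      refine ⟨α, ?_, ?_⟩
      · intro y
        rw [hcostν' y α, hval' y]
        have h4 : cost q F T G ν T₀ y α - ε ≤ value q F T G ν T₀ y :=
          le_value y (fun γ => by have := key y γ; linarith)
        linarith
      · intro y
        dsimp only
        rw [hcostν' y α, sub_self, abs_zero]
        exact hε.le
    · -- approximate equilibrium property for the truncated game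
      intro x
      rw [← hνdef]
      have hb : ∀ γ : ℕ → S → A,
          cost q F T₀ (fun y _ => cost q F T G ν T₀ y α) ν t x α ≤
            cost q F T₀ (fun y _ => cost q F T G ν T₀ y α) ν t x γ + δ := by
        intro γ
        rw [← costconcat γ x]
        have h1 := hMFE x
        rw [← hνdef] at h1
        have h2 := value_le_cost (H := T) (Gt := G) (t := t) hq0 hqsum hF x hνP (concat T₀ γ α)
        have h3 := identity0 x
        linarith
      have h4 : cost q F T₀ (fun y _ => cost q F T G ν T₀ y α) ν t x α - ε ≤
          value q F T₀ (fun y _ => cost q F T G ν T₀ y α) ν t x :=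
        le_value x (fun γ => by have := hb γ; linarith)
      linarith [h4]
  · -- ⊇ : from the DPP set to the set value
    intro hφ ε hε
    have hε'pos : 0 < ε / 4 := by positivity
    obtain ⟨ψ, α, hclose, hmem, hMFET₀⟩ := hφ (ε / 4) hε'pos
    set ν : ℕ → S → ℝ := flow q α t μ with hνdef
    have hνP : ∀ r, IsProb (ν r) := isProb_flow hq0 hqsum hμ
    obtain ⟨α', hMFE', hψclose⟩ := hmem
    dsimp only at hψclose
    have hν'P : ∀ r, IsProb (flow q α' T₀ (ν T₀) r) := isProb_flow hq0 hqsum (hνP T₀)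
    have hβlow : ∀ r, r < T₀ → concat T₀ α α' r = α r :=
      fun r hr => funext fun z => by simp [concat, hr]
    have hβhigh : ∀ r, T₀ ≤ r → concat T₀ α α' r = α' r :=
      fun r hr => funext fun z => by
        simp only [concat, if_neg (show ¬ r < T₀ by omega)]
    set nh : ℕ → S → ℝ := flow q (concat T₀ α α') t μ with hnhdef
    have hnhP : ∀ r, IsProb (nh r) := isProb_flow hq0 hqsum hμ
    have hnhlow : ∀ s, s ≤ T₀ → nh s = ν s := fun s hs => by
      rw [hnhdef, hνdef]
      exact flow_congr s (fun r h1 h2 => hβlow r (by omega))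
    have hnhhigh : ∀ s, T₀ ≤ s → nh s = flow q α' T₀ (ν T₀) s := by
      intro s hs
      have h := flow_restart (q := q) (μ := μ) htT₀.le
        (fun r hr => (hβhigh r hr).symm) s hs
      rw [← hnhdef] at h
      rw [hnhlow T₀ le_rfl] at h
      exact h.symm
    have hcosthigh : ∀ (y : S) (γ : ℕ → S → A),
        cost q F T G nh T₀ y γ = cost q F T G (flow q α' T₀ (ν T₀)) T₀ y γ :=
      fun y γ => cost_congr y (fun r h1 _ => hnhhigh r h1) (fun _ _ _ => rfl)
        (fun z => by rw [hnhhigh T hT₀T])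
    have hcostβhigh : ∀ y, cost q F T G nh T₀ y (concat T₀ α α')
        = cost q F T G (flow q α' T₀ (ν T₀)) T₀ y α' :=
      fun y => cost_congr y (fun r h1 _ => hnhhigh r h1) (fun r hr _ => hβhigh r hr)
        (fun z => by rw [hnhhigh T hT₀T])
    have hdec : ∀ (x : S) (γ : ℕ → S → A), cost q F T G nh t x γ =
        (∑ y, chain q ν γ t x T₀ y * cost q F T G nh T₀ y γ) +
        ∑ s ∈ Finset.Ico t T₀, ∑ z, chain q ν γ t x s z * F s z (ν s) (γ s z) :=
      fun x γ => cost_decomp' x htT₀.le hT₀T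
        (fun r _ h2 => hnhlow r (by omega)) (fun _ _ _ => rfl)
    have hdecβ : ∀ x : S, cost q F T G nh t x (concat T₀ α α') =
        (∑ y, chain q ν α t x T₀ y * cost q F T G nh T₀ y (concat T₀ α α')) +
        ∑ s ∈ Finset.Ico t T₀, ∑ z, chain q ν α t x s z * F s z (ν s) (α s z) :=
      fun x => cost_decomp' x htT₀.le hT₀T
        (fun r _ h2 => hnhlow r (by omega)) (fun r _ hr => hβlow r hr)
    have hcostψ : ∀ (x : S) (γ : ℕ → S → A), cost q F T₀ ψ ν t x γ =
        (∑ y, chain q ν γ t x T₀ y * ψ y (ν T₀)) +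
        ∑ s ∈ Finset.Ico t T₀, ∑ z, chain q ν γ t x s z * F s z (ν s) (γ s z) :=
      fun x γ => rfl
    have hpγ : ∀ (x : S) (γ : ℕ → S → A), IsProb (chain q ν γ t x T₀) :=
      fun x γ => isProb_chain hq0 hqsum x hνP T₀
    -- key closeness between the concatenated full cost and the truncated cost
    have hBclose : ∀ x : S,
        |cost q F T G nh t x (concat T₀ α α') - cost q F T₀ ψ ν t x α| ≤ ε / 4 := by
      intro x
      rw [hdecβ x, hcostψ x α]
      have e2 : ((∑ y, chain q ν α t x T₀ y * cost q F T G nh T₀ y (concat T₀ α α')) +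
          ∑ s ∈ Finset.Ico t T₀, ∑ z, chain q ν α t x s z * F s z (ν s) (α s z)) -
          ((∑ y, chain q ν α t x T₀ y * ψ y (ν T₀)) +
          ∑ s ∈ Finset.Ico t T₀, ∑ z, chain q ν α t x s z * F s z (ν s) (α s z)) =
          ∑ y, chain q ν α t x T₀ y *
            (cost q F T G nh T₀ y (concat T₀ α α') - ψ y (ν T₀)) := by
        simp_rw [mul_sub, Finset.sum_sub_distrib]
        ring
      rw [e2]
      calc |∑ y, chain q ν α t x T₀ y *
            (cost q F T G nh T₀ y (concat T₀ α α') - ψ y (ν T₀))|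
          ≤ ∑ y, |chain q ν α t x T₀ y *
            (cost q F T G nh T₀ y (concat T₀ α α') - ψ y (ν T₀))| :=
            Finset.abs_sum_le_sum_abs _ _
        _ ≤ ∑ y, chain q ν α t x T₀ y * (ε / 4) := by
            refine Finset.sum_le_sum fun y _ => ?_
            rw [abs_mul, abs_of_nonneg ((hpγ x α).1 y)]
            refine mul_le_mul_of_nonneg_left ?_ ((hpγ x α).1 y)
            rw [hcostβhigh y, abs_sub_comm]
            exact hψclose y
        _ = ε / 4 := by rw [← Finset.sum_mul, (hpγ x α).2, one_mul]
    have hφclose : ∀ x : S, |φ x - cost q F T G nh t x (concat T₀ α α')| ≤ ε := by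
      intro x
      calc |φ x - cost q F T G nh t x (concat T₀ α α')|
          ≤ |φ x - cost q F T₀ ψ ν t x α| +
            |cost q F T₀ ψ ν t x α - cost q F T G nh t x (concat T₀ α α')| :=
            abs_sub_le _ _ _
        _ ≤ ε / 4 + ε / 4 := add_le_add (hclose x) (by rw [abs_sub_comm]; exact hBclose x)
        _ ≤ ε := by linarith
    have hMFEβ : ∀ x : S, ∀ γ : ℕ → S → A,
        cost q F T G nh t x (concat T₀ α α') ≤ cost q F T G nh t x γ + ε := by
      intro x γ
      have hge : ∀ y, ψ y (ν T₀) - 2 * (ε / 4) ≤ cost q F T G nh T₀ y γ := by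
        intro y
        rw [hcosthigh y γ]
        have h1 := value_le_cost (H := T) (Gt := G) (t := T₀) hq0 hqsum hF y hν'P γ
        have h2 := hMFE' y
        have h3 := abs_le.mp (hψclose y)
        linarith [h3.1, h3.2]
      have hstep : cost q F T₀ ψ ν t x γ ≤ cost q F T G nh t x γ + 2 * (ε / 4) := by
        rw [hdec x γ, hcostψ x γ]
        have h5 : ∑ y, chain q ν γ t x T₀ y * ψ y (ν T₀) ≤
            ∑ y, chain q ν γ t x T₀ y * (cost q F T G nh T₀ y γ + 2 * (ε / 4)) :=
          Finset.sum_le_sum fun y _ =>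
            mul_le_mul_of_nonneg_left (by linarith [hge y]) ((hpγ x γ).1 y)
        have h6 : ∑ y, chain q ν γ t x T₀ y * (cost q F T G nh T₀ y γ + 2 * (ε / 4)) =
            (∑ y, chain q ν γ t x T₀ y * cost q F T G nh T₀ y γ) + 2 * (ε / 4) := by
          simp_rw [mul_add, Finset.sum_add_distrib, ← Finset.sum_mul, (hpγ x γ).2, one_mul]
        rw [h6] at h5
        linarith
      have h7 := abs_le.mp (hBclose x)
      have h8 := hMFET₀ x
      rw [← hνdef] at h8
      have h9 := value_le_cost (H := T₀) (Gt := ψ) (t := t) hq0 hqsum hF x hνP γ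
      linarith [h7.1, h7.2]
    refine ⟨concat T₀ α α', ?_, ?_⟩
    · intro x
      rw [← hnhdef]
      have h4 : cost q F T G nh t x (concat T₀ α α') - ε ≤ value q F T G nh t x :=
        le_value x (fun γ => by have := hMFEβ x γ; linarith)
      linarith
    · intro x
      rw [← hnhdef]
      exact hφclose x
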